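/- Let H be a Hopf algebra and let h ↦ i_h be an H-operation in a graded differential algebra Ω, with L_h = d i_h + i_h d + ε(h) Id_Ω. Then for each p ∈ ℕ, the set {ω ∈ Ω^p : i_h(ω) = 0 and i_h(dω) = 0 for all h ∈ H} equals Ω_B^p, the space of basic elements of degree p; consequently the term E_1^{p,0} of the spectral sequence of the canonical filtration F^p(Ω^n) = {ω ∈ Ω^n : i_{h_1}⋯i_{h_{n−p+1}}(ω) = 0 for all h_k ∈ H} equals Ω_B^p. -/

import Mathlib

open scoped TensorProduct DirectSum

/-- A differential making an ℕ-graded algebra into a graded differential algebra: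
`d` is homogeneous of degree `+1`, squares to zero, and is an antiderivation
(graded Leibniz rule). -/
structure IsGDA (K : Type) [Field K] (Ω : Type) [Ring Ω] [Algebra K Ω]
    (𝒜 : ℕ → Submodule K Ω) (d : Ω →ₗ[K] Ω) : Prop where
  d_mem : ∀ (n : ℕ), ∀ a ∈ 𝒜 n, d a ∈ 𝒜 (n + 1)
  d_sq : ∀ a : Ω, d (d a) = 0
  leibniz : ∀ (n : ℕ) (a b : Ω), a ∈ 𝒜 n →
    d (a * b) = d a * b + ((-1 : K) ^ n) • (a * d b)

section HopfHelpers

variable (K : Type) [Field K] (H : Type) [Ring H] [Algebra K H]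

/-- The right adjoint action associated to a coproduct `comul` and an antipode `anti`:
`adAct comul anti g` is the linear map `h ↦ ad(h)g = Σⱼ S(h⁽¹⁾ⱼ) g h⁽²⁾ⱼ`. -/
noncomputable def adAct (comul : H →ₗ[K] H ⊗[K] H) (anti : H →ₗ[K] H) (g : H) :
    H →ₗ[K] H :=
  TensorProduct.lift (LinearMap.mk₂ K (fun x y => anti x * g * y)
    (fun x x' y => by simp [map_add, add_mul])
    (fun c x y => by simp [map_smul, smul_mul_assoc])
    (fun x y y' => by simp [mul_add])
    (fun c x y => by simp [mul_smul_comm])) ∘ₗ comul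

variable (Ω : Type) [Ring Ω] [Algebra K Ω]

/-- `L_h := d ∘ i_h + i_h ∘ d + ε(h) Id`, as a linear map in `h`. -/
noncomputable def HLop (counit : H →ₗ[K] K) (d : Module.End K Ω)
    (i : H →ₗ[K] Module.End K Ω) : H →ₗ[K] Module.End K Ω :=
  LinearMap.mulLeft K d ∘ₗ i + LinearMap.mulRight K d ∘ₗ i +
    LinearMap.toSpanSingleton K (Module.End K Ω) 1 ∘ₗ counit

/-- The Sweedler sum `h ↦ Σⱼ F(h⁽¹⁾ⱼ) ∘ G(h⁽²⁾ⱼ)` of two families of operators. -/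
noncomputable def sweedlerEnd (comul : H →ₗ[K] H ⊗[K] H)
    (F G : H →ₗ[K] Module.End K Ω) : H →ₗ[K] Module.End K Ω :=
  TensorProduct.lift ((LinearMap.mul K (Module.End K Ω)).compl₁₂ F G) ∘ₗ comul

/-- The Sweedler sum `h ↦ Σⱼ F(h⁽¹⁾ⱼ)(α) * G(h⁽²⁾ⱼ)(β)` of values of two families of
operators. -/
noncomputable def sweedlerPair (comul : H →ₗ[K] H ⊗[K] H)
    (F G : H →ₗ[K] Module.End K Ω) (α β : Ω) : H →ₗ[K] Ω :=
  TensorProduct.lift ((LinearMap.mul K Ω).compl₁₂ ((LinearMap.applyₗ α).comp F)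
    ((LinearMap.applyₗ β).comp G)) ∘ₗ comul

/-- An operation of a Hopf algebra `H` (with coproduct `comul`, counit `counit` and
antipode `anti`) in a graded differential algebra `Ω`: a linear map `h ↦ i_h` into the
degree `-1` endomorphisms of `Ω` with `i_1 = 0`, satisfying, with
`L_h = d i_h + i_h d + ε(h) Id`:
`i_h(αβ) = Σⱼ i_{h⁽¹⁾ⱼ}(α) L_{h⁽²⁾ⱼ}(β) + (-1)^a α i_h(β)` for `α` of degree `a`,
`i_g L_h = Σⱼ L_{h⁽¹⁾ⱼ} i_{ad(h⁽²⁾ⱼ)g}`, and `L_h L_g = L_{hg}`. -/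
structure IsHopfOperation (comul : H →ₗ[K] H ⊗[K] H) (counit : H →ₗ[K] K)
    (anti : H →ₗ[K] H) (𝒜 : ℕ → Submodule K Ω) (d : Ω →ₗ[K] Ω)
    (i : H →ₗ[K] Module.End K Ω) : Prop where
  i_one : i 1 = 0
  i_mem : ∀ (h : H) (n : ℕ), ∀ a ∈ 𝒜 (n + 1), i h a ∈ 𝒜 n
  i_deg0 : ∀ (h : H), ∀ a ∈ 𝒜 0, i h a = 0
  antider : ∀ (h : H) (n : ℕ) (α β : Ω), α ∈ 𝒜 n →
    i h (α * β) = sweedlerPair K H Ω comul i (HLop K H Ω counit d i) α β h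
      + ((-1 : K) ^ n) • (α * i h β)
  i_L : ∀ g h : H, i g * HLop K H Ω counit d i h
      = sweedlerEnd K H Ω comul (HLop K H Ω counit d i) (i ∘ₗ adAct K H comul anti g) h
  L_mul : ∀ g h : H, HLop K H Ω counit d i h * HLop K H Ω counit d i g
      = HLop K H Ω counit d i (h * g)

end HopfHelpers

section Stmt6

variable (K : Type) [Field K] (H : Type) [Ring H] [Algebra K H]
variable (Ω : Type) [Ring Ω] [Algebra K Ω]

/-- The canonical filtration of an `H`-operation:
`F^p(Ωⁿ) = {ω ∈ Ωⁿ | i_{h₁} ⋯ i_{h_{n-p+1}}(ω) = 0 for all h₁, …, h_{n-p+1} ∈ H}`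
(for `n ≥ p`). -/
def Fset (𝒜 : ℕ → Submodule K Ω) (i : H →ₗ[K] Module.End K Ω) (p n : ℕ) : Set Ω :=
  {ω | ω ∈ 𝒜 n ∧ ∀ hs : Fin (n - p + 1) → H, (List.ofFn fun k => i (hs k)).prod ω = 0}

/-- The set of basic elements of degree `p` of an `H`-operation: elements of `Ωᵖ` that
are horizontal (`i_h ω = 0` for all `h`) and invariant (`L_h ω = ε(h) • ω` for all
`h`). -/
def basicSet (counit : H →ₗ[K] K) (𝒜 : ℕ → Submodule K Ω) (d : Ω →ₗ[K] Ω)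
    (i : H →ₗ[K] Module.End K Ω) (p : ℕ) : Set Ω :=
  {ω | ω ∈ 𝒜 p ∧ (∀ h : H, i h ω = 0) ∧
    (∀ h : H, HLop K H Ω counit d i h ω = counit h • ω)}

end Stmt6

/-- Let `H` be a Hopf algebra and `h ↦ i_h` an `H`-operation in a
graded differential algebra `Ω`, with `L_h = d i_h + i_h d + ε(h) Id`.  Then for each
`p ∈ ℕ` the set `{ω ∈ Ωᵖ | i_h(ω) = 0 and i_h(dω) = 0 for all h ∈ H}` equals the space
`Ω_B^p` of basic elements of degree `p`; consequently the term
`E₁^{p,0} = {ω ∈ F^p(Ωᵖ) | dω ∈ F^{p+1}(Ω^{p+1})}` of the spectral sequence of the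
canonical filtration also equals `Ω_B^p`. -/
theorem stmt6 (K : Type) [Field K] (H : Type) [Ring H] [HopfAlgebra K H]
    (Ω : Type) [Ring Ω] [Algebra K Ω] (𝒜 : ℕ → Submodule K Ω) [GradedAlgebra 𝒜]
    (d : Ω →ₗ[K] Ω) (hΩ : IsGDA K Ω 𝒜 d)
    (i : H →ₗ[K] Module.End K Ω)
    (hop : IsHopfOperation K H Ω (Coalgebra.comul (R := K) (A := H)) (Coalgebra.counit (R := K) (A := H))
      (HopfAlgebra.antipode K : H →ₗ[K] H) 𝒜 d i)
    (p : ℕ) :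
    {ω : Ω | ω ∈ 𝒜 p ∧ ∀ h : H, i h ω = 0 ∧ i h (d ω) = 0}
        = basicSet K H Ω (Coalgebra.counit (R := K) (A := H)) 𝒜 d i p ∧
    {ω : Ω | ω ∈ Fset K H Ω 𝒜 i p p ∧ d ω ∈ Fset K H Ω 𝒜 i (p + 1) (p + 1)}
        = basicSet K H Ω (Coalgebra.counit (R := K) (A := H)) 𝒜 d i p := by
  classical
  have hL : ∀ (h : H) (ω : Ω),
      HLop K H Ω (Coalgebra.counit (R := K) (A := H)) d i h ω
        = d (i h ω) + i h (d ω) + Coalgebra.counit (R := K) h • ω := by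
    intro h ω
    simp [HLop, Module.End.mul_apply, LinearMap.toSpanSingleton_apply]
  have hset : {ω : Ω | ω ∈ 𝒜 p ∧ ∀ h : H, i h ω = 0 ∧ i h (d ω) = 0}
      = basicSet K H Ω (Coalgebra.counit (R := K) (A := H)) 𝒜 d i p := by
    ext ω
    simp only [Set.mem_setOf_eq, basicSet]
    constructor
    · rintro ⟨hm, hh⟩
      refine ⟨hm, fun h => (hh h).1, fun h => ?_⟩
      rw [hL, (hh h).1, (hh h).2, map_zero, zero_add, zero_add]
    · rintro ⟨hm, hhor, hinv⟩
      refine ⟨hm, fun h => ⟨hhor h, ?_⟩⟩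
      have h1 := hinv h
      rw [hL, hhor h, map_zero, zero_add] at h1
      exact add_eq_right.mp h1
  refine ⟨hset, ?_⟩
  rw [← hset]
  ext ω
  simp only [Set.mem_setOf_eq, Fset]
  have hone : ∀ (m : ℕ), m = 0 → ∀ (j : H →ₗ[K] Module.End K Ω) (x : Ω),
      ((∀ hs : Fin (m + 1) → H, (List.ofFn fun k => j (hs k)).prod x = 0)
        ↔ ∀ h : H, j h x = 0) := by
    rintro m rfl j x
    constructor
    · intro hall h
      have := hall (fun _ => h)
      simpa [List.ofFn_succ, Module.End.mul_apply] using this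
    · intro hall hs
      simpa [List.ofFn_succ, Module.End.mul_apply] using hall (hs 0)
  constructor
  · rintro ⟨⟨hm, h1⟩, hm2, h2⟩
    exact ⟨hm, fun h => ⟨(hone (p - p) (Nat.sub_self p) i ω).mp h1 h, (hone (p + 1 - (p + 1)) (Nat.sub_self (p+1)) i (d ω)).mp h2 h⟩⟩
  · rintro ⟨hm, hh⟩
    exact ⟨⟨hm, (hone (p - p) (Nat.sub_self p) i ω).mpr fun h => (hh h).1⟩,
      hΩ.d_mem p ω hm, (hone (p + 1 - (p + 1)) (Nat.sub_self (p+1)) i (d ω)).mpr fun h => (hh h).2⟩
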